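/- Let D < 0 be a fundamental discriminant, k = ℚ(√D) the imaginary quadratic field of discriminant D, and let 𝔞 be a nonzero fractional ideal of k with ℤ-basis {α, β}. Then the three rational numbers a = N(α)/N(𝔞), b = Tr_{k/ℚ}(α·β̄)/N(𝔞), c = N(β)/N(𝔞) are integers, and they satisfy b² − 4ac = D. (In other words, Q_𝔞(x,y) = N(xα + yβ)/N(𝔞) is an integral binary quadratic form of discriminant D.) -/

import Mathlib

open NumberField
open scoped nonZeroDivisors

attribute [local instance 2000] Submodule.module

/-- Let `D < 0` be a fundamental discriminant, `k = ℚ(√D)` the imaginary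
quadratic field of discriminant `D` (so `k` is a number field of degree 2 over `ℚ` with
discriminant `D`), and let `𝔞` be a nonzero fractional ideal of `k` with ℤ-basis `{α, β}`.
Here `σ` is the nontrivial ℚ-automorphism of `k`, so `σ β = β̄`.  Then the three rational
numbers `a = N(α)/N(𝔞)`, `b = Tr(α·β̄)/N(𝔞)`, `c = N(β)/N(𝔞)` are integers satisfying
`b² − 4ac = D`. -/
theorem integral_binary_quadratic_form_of_fractional_ideal
    (D : ℤ) (hDneg : D < 0)
    (k : Type) [Field k] [NumberField k]
    (hdeg : Module.finrank ℚ k = 2) (hdisc : NumberField.discr k = D)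
    (σ : k ≃ₐ[ℚ] k) (hσ : σ ≠ AlgEquiv.refl)
    (𝔞 : FractionalIdeal (𝓞 k)⁰ k) (h𝔞 : 𝔞 ≠ 0)
    (α β : k)
    (hbasis : ∀ x : k, x ∈ 𝔞 ↔ ∃ m n : ℤ, x = m • α + n • β) :
    ∃ a b c : ℤ,
      (a : ℚ) = Algebra.norm ℚ α / FractionalIdeal.absNorm 𝔞 ∧
      (b : ℚ) = Algebra.trace ℚ k (α * σ β) / FractionalIdeal.absNorm 𝔞 ∧
      (c : ℚ) = Algebra.norm ℚ β / FractionalIdeal.absNorm 𝔞 ∧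
      b ^ 2 - 4 * a * c = D := by
  classical
  have hinj : Function.Injective (algebraMap ℚ k) := (algebraMap ℚ k).injective
  -- `k/ℚ` is Galois with automorphism group `{refl, σ}`
  have hcardalg : Fintype.card (k →ₐ[ℚ] ℂ) = 2 := by
    rw [AlgHom.card ℚ k ℂ, hdeg]
  have hcardle : Fintype.card (k ≃ₐ[ℚ] k) ≤ 2 := by
    obtain ⟨φ⟩ : Nonempty (k →ₐ[ℚ] ℂ) := by
      rw [← Fintype.card_pos_iff, hcardalg]; norm_num
    refine le_trans (Fintype.card_le_of_injective
      (fun g : k ≃ₐ[ℚ] k => φ.comp (g : k →ₐ[ℚ] k)) ?_) (le_of_eq hcardalg)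
    intro g g' h
    ext x
    exact φ.injective (by simpa using DFunLike.congr_fun h x)
  have hcard : Fintype.card (k ≃ₐ[ℚ] k) = 2 := by
    refine le_antisymm hcardle ?_
    haveI : Nontrivial (k ≃ₐ[ℚ] k) := ⟨⟨σ, AlgEquiv.refl, hσ⟩⟩
    exact Fintype.one_lt_card
  haveI hGal : IsGalois ℚ k := IsGalois.of_card_aut_eq_finrank ℚ k (by rw [← Fintype.card_eq_nat_card, hcard, hdeg])
  have hrs : (AlgEquiv.refl : k ≃ₐ[ℚ] k) ≠ σ := Ne.symm hσ
  have huniv : (Finset.univ : Finset (k ≃ₐ[ℚ] k)) = {AlgEquiv.refl, σ} := by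
    symm
    apply Finset.eq_univ_of_card
    rw [Finset.card_insert_of_notMem (by simpa using hrs), Finset.card_singleton, hcard]
  have hσσ : ∀ x : k, σ (σ x) = x := by
    have h2 : σ * σ = 1 := by
      have hmem : σ * σ ∈ ({AlgEquiv.refl, σ} : Finset (k ≃ₐ[ℚ] k)) := by
        rw [← huniv]; exact Finset.mem_univ _
      rcases Finset.mem_insert.mp hmem with h | h
      · exact h
      · rw [Finset.mem_singleton] at h
        exact absurd (mul_right_cancel (h.trans (one_mul σ).symm)) hσ
    intro x
    have := DFunLike.congr_fun h2 x
    simpa using this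
  have htr : ∀ x : k, algebraMap ℚ k (Algebra.trace ℚ k x) = x + σ x := by
    intro x
    rw [trace_eq_sum_automorphisms, huniv,
      Finset.sum_insert (by simpa using hrs), Finset.sum_singleton]
    rfl
  have hnm : ∀ x : k, algebraMap ℚ k (Algebra.norm ℚ x) = x * σ x := by
    intro x
    rw [Algebra.norm_eq_prod_automorphisms, huniv,
      Finset.prod_insert (by simpa using hrs), Finset.prod_singleton]
    rfl
  -- membership facts
  have hα : α ∈ 𝔞 := (hbasis α).mpr ⟨1, 0, by simp⟩
  have hβ : β ∈ 𝔞 := (hbasis β).mpr ⟨0, 1, by simp⟩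
  have hαβ : α - β ∈ 𝔞 := (hbasis _).mpr ⟨1, -1, by simp [sub_eq_add_neg]⟩
  set N : ℚ := FractionalIdeal.absNorm 𝔞 with hNdef
  have hN0 : N ≠ 0 := fun h => h𝔞 (FractionalIdeal.absNorm_eq_zero_iff.mp h)
  -- integrality: for `x ∈ 𝔞`, `N(x)/N(𝔞)` is an integer
  have hint : ∀ x : k, x ∈ 𝔞 → ∃ m : ℤ, (m : ℚ) * N = Algebra.norm ℚ x := by
    intro x hx
    by_cases hx0 : x = 0
    · refine ⟨0, ?_⟩
      have : algebraMap ℚ k (Algebra.norm ℚ x) = algebraMap ℚ k 0 := by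
        rw [hnm, hx0]; simp
      rw [hinj this]; simp
    · have hle : FractionalIdeal.spanSingleton (𝓞 k)⁰ x ≤ 𝔞 :=
        FractionalIdeal.spanSingleton_le_iff_mem.mpr hx
      have h1 : 𝔞⁻¹ * FractionalIdeal.spanSingleton (𝓞 k)⁰ x ≤ 1 := by
        calc 𝔞⁻¹ * FractionalIdeal.spanSingleton (𝓞 k)⁰ x ≤ 𝔞⁻¹ * 𝔞 :=
              by gcongr
          _ = 1 := by rw [mul_comm]; exact mul_inv_cancel₀ h𝔞
      obtain ⟨I₀, hI₀⟩ := FractionalIdeal.le_one_iff_exists_coeIdeal.mp h1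
      have hsp : FractionalIdeal.spanSingleton (𝓞 k)⁰ x =
          𝔞 * (I₀ : FractionalIdeal (𝓞 k)⁰ k) := by
        rw [hI₀, ← mul_assoc, mul_inv_cancel₀ h𝔞, one_mul]
      have habs := congrArg FractionalIdeal.absNorm hsp
      rw [map_mul, FractionalIdeal.coeIdeal_absNorm,
        FractionalIdeal.absNorm_span_singleton] at habs
      rcases abs_cases (Algebra.norm ℚ x) with ⟨heq, _⟩ | ⟨heq, _⟩
      · exact ⟨(Ideal.absNorm I₀ : ℤ), by rw [← heq, habs]; push_cast; ring⟩
      · exact ⟨-(Ideal.absNorm I₀ : ℤ), by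
          have : Algebra.norm ℚ x = -(N * (Ideal.absNorm I₀ : ℚ)) := by
            rw [← habs, heq, neg_neg]
          rw [this]; push_cast; ring⟩
  obtain ⟨a, ha⟩ := hint α hα
  obtain ⟨c, hc⟩ := hint β hβ
  obtain ⟨e', he'⟩ := hint (α - β) hαβ
  set b : ℤ := a + c - e' with hbdef
  have htrace_id : Algebra.trace ℚ k (α * σ β) =
      Algebra.norm ℚ α + Algebra.norm ℚ β - Algebra.norm ℚ (α - β) := by
    apply hinj
    rw [map_sub, map_add, htr, hnm, hnm, hnm, map_mul σ, hσσ, map_sub σ]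
    ring
  have hb : (b : ℚ) * N = Algebra.trace ℚ k (α * σ β) := by
    rw [htrace_id, ← ha, ← hc, ← he', hbdef]
    push_cast; ring
  -- `![α, β]` is a `ℚ`-basis of `k`
  have hspan : ⊤ ≤ Submodule.span ℚ (Set.range ![α, β]) := by
    rintro y -
    have hx : ∃ x, x ∈ 𝔞 ∧ x ≠ 0 := by
      by_contra h
      push_neg at h
      apply h𝔞
      ext z
      simp only [FractionalIdeal.mem_zero_iff]
      exact ⟨fun hz => h z hz, fun hz => by rw [hz]; exact (hbasis 0).mpr ⟨0, 0, by simp⟩⟩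
    obtain ⟨x, hx𝔞, hx0⟩ := hx
    obtain ⟨w, z, hz⟩ := IsLocalization.exists_integer_multiple (𝓞 k)⁰ (y / x)
    set τ := galRestrict ℤ ℚ k (𝓞 k) σ with hτ
    set q : ℚ := Algebra.norm ℚ (algebraMap (𝓞 k) k (w : 𝓞 k)) with hq
    have hw0 : algebraMap (𝓞 k) k (w : 𝓞 k) ≠ 0 := by
      have : (w : 𝓞 k) ≠ 0 := nonZeroDivisors.coe_ne_zero w
      simpa using this
    have hq0 : q ≠ 0 := by
      rw [hq, Algebra.norm_ne_zero_iff]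
      exact hw0
    have hyx : algebraMap (𝓞 k) k (w : 𝓞 k) * y = algebraMap (𝓞 k) k z * x := by
      have : algebraMap (𝓞 k) k z = algebraMap (𝓞 k) k (w : 𝓞 k) * (y / x) := by
        rw [hz, Algebra.smul_def]
      field_simp [hx0] at this
      linear_combination -this
    have hqy : q • y ∈ 𝔞 := by
      have hkey : q • y = algebraMap (𝓞 k) k (τ (w : 𝓞 k) * z) * x := by
        rw [Algebra.smul_def, hq, hnm, map_mul, algebraMap_galRestrict_apply]
        calc algebraMap (𝓞 k) k (w : 𝓞 k) * σ (algebraMap (𝓞 k) k (w : 𝓞 k)) * y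
            = σ (algebraMap (𝓞 k) k (w : 𝓞 k)) * (algebraMap (𝓞 k) k (w : 𝓞 k) * y) := by
              ring
          _ = σ (algebraMap (𝓞 k) k (w : 𝓞 k)) * (algebraMap (𝓞 k) k z * x) := by
              rw [hyx]
          _ = σ (algebraMap (𝓞 k) k (w : 𝓞 k)) * algebraMap (𝓞 k) k z * x := by ring
      rw [hkey, ← Algebra.smul_def]
      have hx' : x ∈ (𝔞 : Submodule (𝓞 k) k) := FractionalIdeal.mem_coe.mpr hx𝔞
      exact FractionalIdeal.mem_coe.mp (Submodule.smul_mem _ _ hx')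
    have hmem : q • y ∈ Submodule.span ℚ (Set.range ![α, β]) := by
      obtain ⟨m, n, hmn⟩ := (hbasis _).mp hqy
      rw [hmn, ← Int.cast_smul_eq_zsmul ℚ m α, ← Int.cast_smul_eq_zsmul ℚ n β]
      exact Submodule.add_mem _
        (Submodule.smul_mem _ _ (Submodule.subset_span ⟨0, rfl⟩))
        (Submodule.smul_mem _ _ (Submodule.subset_span ⟨1, rfl⟩))
    have := Submodule.smul_mem (Submodule.span ℚ (Set.range ![α, β])) q⁻¹ hmem
    rwa [inv_smul_smul₀ hq0] at this
  have hcard2 : Fintype.card (Fin 2) = Module.finrank ℚ k := by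
    rw [Fintype.card_fin, hdeg]
  let bQ : Module.Basis (Fin 2) ℚ k := basisOfTopLeSpanOfCardEqFinrank ![α, β] hspan hcard2
  have hbQ : ⇑bQ = ![α, β] := coe_basisOfTopLeSpanOfCardEqFinrank _ _ _
  -- a `ℤ`-basis of `𝔞` given by `α, β`
  have hliQ : LinearIndependent ℚ ![α, β] := by
    rw [← hbQ]; exact bQ.linearIndependent
  have hliZ : LinearIndependent ℤ ![α, β] := by
    refine hliQ.restrict_scalars ?_
    intro r s hrs
    simpa using hrs
  have hα' : α ∈ (𝔞 : Submodule (𝓞 k) k) := FractionalIdeal.mem_coe.mpr hα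
  have hβ' : β ∈ (𝔞 : Submodule (𝓞 k) k) := FractionalIdeal.mem_coe.mpr hβ
  set v : Fin 2 → ↥(𝔞 : Submodule (𝓞 k) k) := ![⟨α, hα'⟩, ⟨β, hβ'⟩] with hvdef
  have hvcoe : ∀ j : Fin 2, ((v j : k)) = ![α, β] j := by
    intro j; fin_cases j <;> rfl
  have hliv : LinearIndependent ℤ v := by
    apply LinearIndependent.of_comp
      ((Submodule.subtype (𝔞 : Submodule (𝓞 k) k)).restrictScalars ℤ)
    have : ((Submodule.subtype (𝔞 : Submodule (𝓞 k) k)).restrictScalars ℤ) ∘ v = ![α, β] := by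
      funext j; exact hvcoe j
    rw [this]; exact hliZ
  have hspanv : ⊤ ≤ Submodule.span ℤ (Set.range v) := by
    rintro ⟨x, hx⟩ -
    obtain ⟨m, n, hmn⟩ := (hbasis x).mp (FractionalIdeal.mem_coe.mp hx)
    have hxeq : (⟨x, hx⟩ : ↥(𝔞 : Submodule (𝓞 k) k)) = m • v 0 + n • v 1 := by
      apply Subtype.ext
      have h0 : ((v 0 : k)) = α := by simpa using hvcoe 0
      have h1 : ((v 1 : k)) = β := by simpa using hvcoe 1
      simp only [Submodule.coe_add, Submodule.coe_smul_of_tower, h0, h1]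
      exact hmn
    rw [hxeq]
    exact Submodule.add_mem _
      (Submodule.smul_mem _ _ (Submodule.subset_span ⟨0, rfl⟩))
      (Submodule.smul_mem _ _ (Submodule.subset_span ⟨1, rfl⟩))
  let bFin : Module.Basis (Fin 2) ℤ ↥(𝔞 : Submodule (𝓞 k) k) := Module.Basis.mk hliv hspanv
  have hcards : Fintype.card (Module.Free.ChooseBasisIndex ℤ (𝓞 k)) = 2 := by
    rw [← Module.finrank_eq_card_chooseBasisIndex, RingOfIntegers.rank, hdeg]
  let eι : Module.Free.ChooseBasisIndex ℤ (𝓞 k) ≃ Fin 2 := Fintype.equivFinOfCardEq hcards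
  let bI : Module.Basis (Module.Free.ChooseBasisIndex ℤ (𝓞 k)) ℤ ↥(𝔞 : Submodule (𝓞 k) k) := bFin.reindex eι.symm
  have hdet : |(NumberField.integralBasis k).det (((↑) : ↥(𝔞 : Submodule (𝓞 k) k) → k) ∘ ⇑bI)| = N :=
    FractionalIdeal.abs_det_basis_change (RingOfIntegers.basis k) 𝔞 bI
  set c' : Module.Free.ChooseBasisIndex ℤ (𝓞 k) → k := ((↑) : ↥(𝔞 : Submodule (𝓞 k) k) → k) ∘ ⇑bI with hc'def
  have hc'eq : c' = ![α, β] ∘ ⇑eι := by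
    funext i
    show ((bI i : k)) = ![α, β] (eι i)
    rw [show bI i = bFin (eι i) by
      simp only [bI, Module.Basis.reindex_apply, Equiv.symm_symm]]
    rw [show bFin (eι i) = v (eι i) by simp only [bFin, Module.Basis.coe_mk]]
    exact hvcoe (eι i)
  -- discriminant computations
  have hdiscr1 : Algebra.discr ℚ c' = Algebra.discr ℚ ![α, β] := by
    rw [hc'eq, ← hbQ]
    have h := Algebra.discr_reindex (A := ℚ) (B := k) bQ eι.symm
    simpa using h
  have hvec : c' = Matrix.vecMul ⇑(NumberField.integralBasis k)
      (((NumberField.integralBasis k).toMatrix c').map (algebraMap ℚ k)) := by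
    funext j
    have hs := Module.Basis.sum_toMatrix_smul_self (NumberField.integralBasis k) c' j
    simp only [Matrix.vecMul, dotProduct, Matrix.map_apply]
    rw [← hs]
    refine Finset.sum_congr rfl fun i _ => ?_
    rw [Algebra.smul_def, mul_comm]
  have hdiscr2 : Algebra.discr ℚ c' =
      ((NumberField.integralBasis k).det c') ^ 2 * (D : ℚ) := by
    conv_lhs => rw [hvec]
    rw [Algebra.discr_of_matrix_vecMul, ← Module.Basis.det_apply]
    congr 1
    rw [← NumberField.coe_discr, hdisc]
  have habs2 : ((NumberField.integralBasis k).det c') ^ 2 = N ^ 2 := by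
    rw [← sq_abs, hdet]
  have hΔ : Algebra.discr ℚ ![α, β] =
      (Algebra.trace ℚ k (α * σ β)) ^ 2 -
        4 * (Algebra.norm ℚ α * Algebra.norm ℚ β) := by
    have hd : Algebra.discr ℚ ![α, β] =
        Algebra.trace ℚ k (α * α) * Algebra.trace ℚ k (β * β) -
          Algebra.trace ℚ k (α * β) * Algebra.trace ℚ k (β * α) := by
      rw [Algebra.discr_def, Matrix.det_fin_two]
      simp [Algebra.traceMatrix_apply, Algebra.traceForm_apply]
    apply hinj
    rw [hd, map_sub (algebraMap ℚ k), map_sub (algebraMap ℚ k),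
      map_mul (algebraMap ℚ k), map_mul (algebraMap ℚ k), map_pow (algebraMap ℚ k),
      map_mul (algebraMap ℚ k), map_mul (algebraMap ℚ k),
      htr, htr, htr, htr, htr, hnm, hnm]
    simp only [map_mul σ, hσσ, map_ofNat]
    ring
  have hkey : (Algebra.trace ℚ k (α * σ β)) ^ 2 -
      4 * (Algebra.norm ℚ α * Algebra.norm ℚ β) = N ^ 2 * (D : ℚ) := by
    rw [← hΔ, ← hdiscr1, hdiscr2, habs2]
  refine ⟨a, b, c, ?_, ?_, ?_, ?_⟩
  · rw [eq_div_iff hN0, ha]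
  · rw [eq_div_iff hN0, hb]
  · rw [eq_div_iff hN0, hc]
  · have hQ : ((b ^ 2 - 4 * a * c : ℤ) : ℚ) * N ^ 2 = (D : ℚ) * N ^ 2 := by
      push_cast
      calc ((b : ℚ) ^ 2 - 4 * a * c) * N ^ 2
          = ((b : ℚ) * N) ^ 2 - 4 * (((a : ℚ) * N) * ((c : ℚ) * N)) := by ring
        _ = (Algebra.trace ℚ k (α * σ β)) ^ 2 -
            4 * (Algebra.norm ℚ α * Algebra.norm ℚ β) := by rw [ha, hb, hc]
        _ = N ^ 2 * (D : ℚ) := hkey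
        _ = (D : ℚ) * N ^ 2 := by ring
    have := mul_right_cancel₀ (pow_ne_zero 2 hN0) hQ
    exact_mod_cast this
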